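/- For all integers ρ ≥ 1 and t ≥ 1, the rational number f(t) = ρ · (∏_{s=1}^{t−1} (ρ + t + s)) / t! is a positive integer. -/

import Mathlib

lemma prod_shift_fact (c b : ℕ) :
    (∏ s ∈ Finset.Icc 1 b, (c + s)) * c.factorial = (c + b).factorial := by
  induction b with
  | zero => simp
  | succ b ih =>
    rw [Finset.prod_Icc_succ_top (by omega)]
    have : (c + (b + 1)).factorial = (c + b).factorial * (c + b + 1) := by
      rw [show c + (b+1) = (c+b) + 1 by ring, Nat.factorial_succ]; ring
    rw [this, ← ih]; ring

/-- For `ρ ≥ 1` and `t ≥ 1`, `f(t) = ρ · (∏_{s=1}^{t−1} (ρ+t+s)) / t!` is a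
positive integer. -/
theorem stmt12 (ρ t : ℕ) (hρ : 1 ≤ ρ) (ht : 1 ≤ t) :
    ∃ m : ℕ, 0 < m ∧
      ((ρ : ℚ) * ∏ s ∈ Finset.Icc 1 (t - 1), ((ρ : ℚ) + t + s)) / (Nat.factorial t : ℚ) =
        m := by
  obtain ⟨a, rfl⟩ : ∃ a, ρ = a + 1 := ⟨ρ - 1, by omega⟩
  obtain ⟨b, rfl⟩ : ∃ b, t = b + 1 := ⟨t - 1, by omega⟩
  set n := a + 2 * b + 2 with hn
  -- positivity of m
  have hb_le : b ≤ n := by omega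
  have hb1_le : b + 1 ≤ n := by omega
  have hlt : n.choose b < n.choose (b + 1) := by
    have h1 : n.choose (b + 1) * (b + 1) = n.choose b * (n - b) :=
      Nat.choose_succ_right_eq n b
    have hpos : 0 < n.choose b := Nat.choose_pos hb_le
    have : n.choose b * (b + 1) < n.choose b * (n - b) :=
      (mul_lt_mul_iff_right₀ hpos).mpr (by omega)
    rw [← h1] at this
    exact Nat.lt_of_mul_lt_mul_right this
  refine ⟨n.choose (b + 1) - n.choose b, by omega, ?_⟩
  -- key nat identity
  have key : (a + 1) * n.factorial =
      (n.choose (b + 1) - n.choose b) * ((b + 1).factorial * (a + b + 2).factorial) := by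
    have e1 : n.choose (b + 1) * (b + 1).factorial * (a + b + 1).factorial = n.factorial := by
      have := Nat.choose_mul_factorial_mul_factorial hb1_le
      rwa [show n - (b + 1) = a + b + 1 by omega] at this
    have e2 : n.choose b * b.factorial * (a + b + 2).factorial = n.factorial := by
      have := Nat.choose_mul_factorial_mul_factorial hb_le
      rwa [show n - b = a + b + 2 by omega] at this
    rw [Nat.sub_mul]
    have f1 : n.choose (b + 1) * ((b + 1).factorial * (a + b + 2).factorial)
        = n.factorial * (a + b + 2) := by
      rw [show (a + b + 2).factorial = (a + b + 1).factorial * (a + b + 2) by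
        rw [show a + b + 2 = (a + b + 1) + 1 by ring, Nat.factorial_succ]; ring, ← e1]
      ring
    have f2 : n.choose b * ((b + 1).factorial * (a + b + 2).factorial)
        = n.factorial * (b + 1) := by
      rw [Nat.factorial_succ, ← e2]; ring
    rw [f1, f2]
    have hr : n.factorial * (a + b + 2) = (a + 1) * n.factorial + n.factorial * (b + 1) := by
      ring
    omega
  -- the product
  have hprod : (∏ s ∈ Finset.Icc 1 b, ((a : ℚ) + 1 + (b + 1) + s)) =
      ((∏ s ∈ Finset.Icc 1 b, (a + b + 2 + s) : ℕ) : ℚ) := by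
    push_cast
    apply Finset.prod_congr rfl
    intro x _; ring
  have hfact : ((∏ s ∈ Finset.Icc 1 b, (a + b + 2 + s) : ℕ) : ℚ)
      * ((a + b + 2).factorial : ℚ) = (n.factorial : ℚ) := by
    have := prod_shift_fact (a + b + 2) b
    rw [show a + b + 2 + b = n by omega] at this
    exact_mod_cast congrArg (Nat.cast : ℕ → ℚ) this
  have hsub : (((n.choose (b + 1) - n.choose b : ℕ)) : ℚ)
      = (n.choose (b + 1) : ℚ) - (n.choose b : ℚ) := by
    exact_mod_cast Nat.cast_sub hlt.le
  have keyQ : ((a : ℚ) + 1) * (n.factorial : ℚ) =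
      ((n.choose (b + 1) - n.choose b : ℕ) : ℚ)
        * (((b + 1).factorial : ℚ) * ((a + b + 2).factorial : ℚ)) := by
    exact_mod_cast congrArg (Nat.cast : ℕ → ℚ) key
  have hfpos : ((b + 1).factorial : ℚ) ≠ 0 := by
    exact_mod_cast (Nat.factorial_pos _).ne'
  have hfpos2 : ((a + b + 2).factorial : ℚ) ≠ 0 := by
    exact_mod_cast (Nat.factorial_pos _).ne'
  push_cast
  push_cast at hprod hfact keyQ
  rw [div_eq_iff hfpos]
  rw [hprod]
  -- now: (a+1) * P = m * (b+1)!
  have : ((∏ s ∈ Finset.Icc 1 b, (a + b + 2 + s) : ℕ) : ℚ)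
      = (n.factorial : ℚ) / ((a + b + 2).factorial : ℚ) := by
    field_simp
    push_cast
    linarith [hfact]
  push_cast at this
  rw [this]
  field_simp
  linarith [keyQ]
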